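/- arXiv:1610.10062 — 8 statements merged into one kernel-verified Lean document; each statement's English description precedes it below -/
import Mathlib

section
/- Let Φ : ℂ → ℂ satisfy Φ(4z) = 2·Φ(z)·(2 + Φ(z)) for all z ∈ ℂ. Then for every s ∈ ℂ, the unconditional sum ∑_{μ > 0, Φ(-μ) = -1} μ^{-s} equals 4^s · ∑_{μ > 0, Φ(-μ) = -2} μ^{-s}, where both sums (tsum) range over the indicated sets of positive real numbers μ and μ^{-s} denotes the complex power exp(-s·log μ) of the positive real μ. -/
/-- For the diamond fractal: `ζ_{Φ,-1}(s) = 4^s · ζ_{Φ,-2}(s)`, where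
`ζ_{Φ,w}(s)` is the unconditional sum of `μ^{-s}` over `{μ > 0 : Φ(-μ) = w}`. -/
theorem diamond_zeta_neg_one_eq (Φ : ℂ → ℂ)
    (hΦ : ∀ z : ℂ, Φ (4 * z) = 2 * Φ z * (2 + Φ z)) (s : ℂ) :
    (∑' μ : {μ : ℝ // 0 < μ ∧ Φ (-(μ : ℂ)) = -1}, ((μ : ℝ) : ℂ) ^ (-s))
      = (4 : ℂ) ^ s *
        ∑' μ : {μ : ℝ // 0 < μ ∧ Φ (-(μ : ℂ)) = -2}, ((μ : ℝ) : ℂ) ^ (-s) := by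
  have key : ∀ μ : ℝ, (0 < μ ∧ Φ (-(μ:ℂ)) = -1) ↔
      (0 < 4*μ ∧ Φ (-((4*μ:ℝ):ℂ)) = -2) := by
    intro μ
    have h4 : -((4*μ:ℝ):ℂ) = 4 * (-(μ:ℂ)) := by push_cast; ring
    constructor
    · rintro ⟨hμ, h⟩
      refine ⟨by linarith, ?_⟩
      rw [h4, hΦ, h]; ring
    · rintro ⟨hμ, h⟩
      refine ⟨by linarith, ?_⟩
      rw [h4, hΦ] at h
      have hsq : (Φ (-(μ:ℂ)) + 1)^2 = 0 := by linear_combination h/2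
      have hz : Φ (-(μ:ℂ)) + 1 = 0 := by
        exact pow_eq_zero_iff (by norm_num) |>.mp hsq
      linear_combination hz
  let e : {μ : ℝ // 0 < μ ∧ Φ (-(μ:ℂ)) = -1} ≃ {μ : ℝ // 0 < μ ∧ Φ (-(μ:ℂ)) = -2} :=
  { toFun := fun x => ⟨4 * x.1, (key x.1).mp x.2⟩
    invFun := fun y => ⟨y.1 / 4, by
      refine (key (y.1/4)).mpr ?_
      have h4 : (4:ℝ) * (y.1/4) = y.1 := by ring
      rw [h4]; exact y.2⟩
    left_inv := fun x => by ext; simp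
    right_inv := fun y => by ext; ring }
  rw [← Equiv.tsum_eq e, ← tsum_mul_left]
  refine tsum_congr fun x => ?_
  have hx : (0:ℝ) ≤ x.1 := le_of_lt x.2.1
  show ((x.1 : ℝ) : ℂ) ^ (-s) = (4:ℂ)^s * (((4 * x.1 : ℝ) : ℂ) ^ (-s))
  rw [show ((4 * x.1 : ℝ) : ℂ) = ((4:ℝ):ℂ) * ((x.1:ℝ):ℂ) by push_cast; ring,
    Complex.mul_cpow_ofReal_nonneg (by norm_num) hx]
  have : ((4:ℝ):ℂ) = (4:ℂ) := by norm_num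
  have h1 : (4:ℂ)^s * (4:ℂ)^(-s) = 1 := by
    rw [← Complex.cpow_add _ _ (by norm_num)]; simp
  rw [this, ← mul_assoc, h1, one_mul]
end

section
/- Let Φ : ℂ → ℂ satisfy Φ(4z) = 2·Φ(z)·(2 + Φ(z)) for all z ∈ ℂ, and let s ∈ ℂ be such that the family μ ↦ μ^{-s} is summable over the set {μ ∈ ℝ : μ > 0, Φ(-μ) = 0}. Then ∑_{μ > 0, Φ(-μ) = -2} μ^{-s} = (4^s - 1) · ∑_{μ > 0, Φ(-μ) = 0} μ^{-s}. -/
set_option maxHeartbeats 2000000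

/-- For the diamond fractal: `ζ_{Φ,-2}(s) = (4^s - 1) · ζ_{Φ,0}(s)`, where
`ζ_{Φ,w}(s)` is the unconditional sum of `μ^{-s}` over `{μ > 0 : Φ(-μ) = w}`,
assuming summability of the family for `w = 0`. -/
theorem diamond_zeta_neg_two_eq (Φ : ℂ → ℂ)
    (hΦ : ∀ z : ℂ, Φ (4 * z) = 2 * Φ z * (2 + Φ z)) (s : ℂ)
    (hsum : Summable fun μ : {μ : ℝ // 0 < μ ∧ Φ (-(μ : ℂ)) = 0} =>
      ((μ : ℝ) : ℂ) ^ (-s)) :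
    (∑' μ : {μ : ℝ // 0 < μ ∧ Φ (-(μ : ℂ)) = -2}, ((μ : ℝ) : ℂ) ^ (-s))
      = ((4 : ℂ) ^ s - 1) *
        ∑' μ : {μ : ℝ // 0 < μ ∧ Φ (-(μ : ℂ)) = 0}, ((μ : ℝ) : ℂ) ^ (-s) := by
  classical
  set f : ℝ → ℂ := fun μ => ((μ : ℝ) : ℂ) ^ (-s) with hfdef
  have key : ∀ μ : ℝ, Φ (-((4 * μ : ℝ) : ℂ)) = 0 ↔
      (Φ (-(μ : ℂ)) = 0 ∨ Φ (-(μ : ℂ)) = -2) := by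
    intro μ
    have h := hΦ (-(μ : ℂ))
    have e : (-(((4 * μ : ℝ)) : ℂ)) = 4 * (-(μ : ℂ)) := by push_cast; ring
    rw [e, h]
    constructor
    · intro h0
      have h1 : Φ (-(μ : ℂ)) * (2 + Φ (-(μ : ℂ))) = 0 := by
        linear_combination h0 / 2
      rcases mul_eq_zero.1 h1 with h2 | h2
      · exact Or.inl h2
      · exact Or.inr (by linear_combination h2)
    · rintro (h0 | h0) <;> rw [h0] <;> ring
  set S0 : Set ℝ := {μ : ℝ | 0 < μ ∧ Φ (-(μ : ℂ)) = 0} with hS0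
  set S2 : Set ℝ := {μ : ℝ | 0 < μ ∧ Φ (-(μ : ℂ)) = -2} with hS2
  -- the bijection μ ↦ 4μ from S0 ∪ S2 to S0
  have mem0 : ∀ x : ℝ, x ∈ S0 ∪ S2 → 0 < x ∧ (Φ (-(x : ℂ)) = 0 ∨ Φ (-(x : ℂ)) = -2) := by
    rintro x (⟨h1, h2⟩ | ⟨h1, h2⟩)
    exacts [⟨h1, Or.inl h2⟩, ⟨h1, Or.inr h2⟩]
  have mem0' : ∀ x : ℝ, 0 < x → (Φ (-(x : ℂ)) = 0 ∨ Φ (-(x : ℂ)) = -2) → x ∈ S0 ∪ S2 := by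
    rintro x h1 (h2 | h2)
    exacts [Or.inl ⟨h1, h2⟩, Or.inr ⟨h1, h2⟩]
  let e : ↥(S0 ∪ S2) ≃ ↥S0 :=
    { toFun := fun x => ⟨4 * x.1,
        ⟨by have := (mem0 x.1 x.2).1; linarith, (key x.1).2 (mem0 x.1 x.2).2⟩⟩
      invFun := fun y => ⟨y.1 / 4, by
        have hy := y.2
        have h4 : (4 : ℝ) * (y.1 / 4) = y.1 := by ring
        refine mem0' _ (by have := hy.1; linarith) ?_
        exact (key (y.1 / 4)).1 (by rw [h4]; exact hy.2)⟩
      left_inv := fun x => by ext; push_cast; ring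
      right_inv := fun y => by ext; push_cast; ring }
  have h4ne : ((4 : ℝ) : ℂ) = (4 : ℂ) := by norm_num
  have hmul : ∀ x : ℝ, 0 < x → f (4 * x) = (4 : ℂ) ^ (-s) * f x := by
    intro x hx
    have := Complex.mul_cpow_ofReal_nonneg (by norm_num : (0:ℝ) ≤ 4) hx.le (-s)
    simpa [hfdef, h4ne] using this
  have h4s : (4 : ℂ) ^ s * (4 : ℂ) ^ (-s) = 1 := by
    rw [← Complex.cpow_add _ _ (by norm_num : (4 : ℂ) ≠ 0)]
    simp
  -- summability on S2
  have hA : Summable fun x : ↥S0 => f x := hsum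
  have hinj : Function.Injective
      (fun y : ↥S2 => (⟨4 * y.1, by
        have hy := y.2
        exact ⟨by have := hy.1; linarith, (key y.1).2 (Or.inr hy.2)⟩⟩ :
        ↥S0)) := by
    intro a b hab
    have : (4 : ℝ) * a.1 = 4 * b.1 := congrArg Subtype.val hab
    exact Subtype.ext (by linarith)
  have hB' : Summable fun y : ↥S2 => f (4 * y.1) := hA.comp_injective hinj
  have hB : Summable fun y : ↥S2 => f y := by
    have h1 : Summable fun y : ↥S2 => (4 : ℂ) ^ s * f (4 * y.1) := hB'.mul_left _
    refine h1.congr fun y => ?_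
    rw [hmul y.1 y.2.1, ← mul_assoc, h4s, one_mul]
  have hdisj : Disjoint S0 S2 := by
    rw [Set.disjoint_left]
    rintro x ⟨_, h0⟩ ⟨_, h2⟩
    rw [h0] at h2
    norm_num at h2
  have hunion : (∑' x : ↥(S0 ∪ S2), f x) = (∑' x : ↥S0, f x) + ∑' x : ↥S2, f x :=
    Summable.tsum_union_disjoint hdisj hA hB
  have hEq : (∑' x : ↥S0, f x) = (4 : ℂ) ^ (-s) * ∑' x : ↥(S0 ∪ S2), f x := by
    rw [← Equiv.tsum_eq e (fun μ : ↥S0 => f μ), ← tsum_mul_left]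
    exact tsum_congr fun x => hmul x.1 (mem0 x.1 x.2).1
  have tB : (∑' μ : {μ : ℝ // 0 < μ ∧ Φ (-(μ : ℂ)) = -2}, ((μ : ℝ) : ℂ) ^ (-s))
      = ∑' x : ↥S2, f x := rfl
  have tA : (∑' μ : {μ : ℝ // 0 < μ ∧ Φ (-(μ : ℂ)) = 0}, ((μ : ℝ) : ℂ) ^ (-s))
      = ∑' x : ↥S0, f x := rfl
  rw [tB, tA]
  rw [hunion] at hEq
  linear_combination (-(4:ℂ) ^ s) * hEq +
    (-((∑' x : ↥S0, f x) + ∑' x : ↥S2, f x)) * h4s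
end

section
/- Define G : ℂ → ℂ by G(s) = (4^s·(4^s - 1)/3) · ( 4/(4^s - 4) + 2/(4^s - 1) ). Let h : ℂ → ℂ be differentiable at 0 with h(0) = 1 and h'(0) = log 2. Then, as s → 0 with s ≠ 0, G(s)·h(s) tends to 2/3 and (G(s)·h(s) - 2/3)/s tends to (10/9)·log 2. -/
open Filter Topology

/-- The spectral zeta function of the diamond fractal, `ζ_L(s) = G(s)·h(s)` with
`G(s) = (4^s(4^s-1)/3)(4/(4^s-4) + 2/(4^s-1))` and `h = ζ_{Φ,0}` satisfying
`h(0) = 1`, `h'(0) = log 2`, extends to `0` with `ζ_L(0) = 2/3` and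
`ζ_L'(0) = (10/9)·log 2`. -/
theorem diamond_zeta_at_zero (G h : ℂ → ℂ)
    (hG : ∀ s : ℂ, G s = ((4 : ℂ) ^ s * ((4 : ℂ) ^ s - 1) / 3) *
      (4 / ((4 : ℂ) ^ s - 4) + 2 / ((4 : ℂ) ^ s - 1)))
    (hdiff : DifferentiableAt ℂ h 0) (h0 : h 0 = 1)
    (h0' : deriv h 0 = Real.log 2) :
    Tendsto (fun s : ℂ => G s * h s) (𝓝[≠] 0) (𝓝 (2 / 3)) ∧
    Tendsto (fun s : ℂ => (G s * h s - 2 / 3) / s) (𝓝[≠] 0)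
      (𝓝 ((10 / 9) * Real.log 2)) := by
  have h4 : (4 : ℂ) ≠ 0 := by norm_num
  -- derivative of s ↦ 4 ^ s at 0
  have hw : HasDerivAt (fun s : ℂ => (4 : ℂ) ^ s) (Complex.log 4) 0 := by
    have := (Complex.hasStrictDerivAt_const_cpow (x := (4 : ℂ)) (y := (0 : ℂ))
      (Or.inl h4)).hasDerivAt
    simpa using this
  have hL : Complex.log 4 = (2 * Real.log 2 : ℝ) := by
    rw [show ((4 : ℂ)) = ((4 : ℝ) : ℂ) by norm_num,
      ← Complex.ofReal_log (by norm_num : (0:ℝ) ≤ 4),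
      show (4 : ℝ) = 2 ^ 2 by norm_num, Real.log_pow]
    push_cast; ring
  set F : ℂ → ℂ := fun s => 2 * (4 : ℂ) ^ s * ((4 : ℂ) ^ s - 2) / ((4 : ℂ) ^ s - 4)
    with hFdef
  have hw0 : (4 : ℂ) ^ (0 : ℂ) = 1 := by simp
  have hden : (4 : ℂ) ^ (0 : ℂ) - 4 ≠ 0 := by rw [hw0]; norm_num
  have hFd : HasDerivAt F (2 * Complex.log 4 / 9) 0 := by
    have hnum : HasDerivAt (fun s : ℂ => 2 * (4 : ℂ) ^ s * ((4 : ℂ) ^ s - 2))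
        ((2 * Complex.log 4) * ((4 : ℂ) ^ (0:ℂ) - 2) +
          (2 * (4 : ℂ) ^ (0:ℂ)) * Complex.log 4) 0 := by
      exact (hw.const_mul 2).mul (hw.sub_const 2)
    have := hnum.div (hw.sub_const 4) hden
    refine this.congr_deriv ?_
    rw [hw0]
    field_simp
    ring
  have hfd : HasDerivAt (fun s => F s * h s)
      ((10 / 9 : ℂ) * Real.log 2) 0 := by
    have := hFd.mul hdiff.hasDerivAt
    have hF0 : F 0 = 2 / 3 := by
      simp only [hFdef]; rw [hw0]; norm_num
    rw [h0, h0', hF0, hL] at this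
    refine this.congr_deriv ?_
    push_cast
    ring
  have hf0 : F 0 * h 0 = 2 / 3 := by
    rw [h0]; simp only [hFdef]; rw [hw0]; norm_num
  -- Eventually, G s * h s = F s * h s on the punctured neighborhood
  have hlogne : Complex.log 4 ≠ 0 := by
    rw [hL]
    simp only [ne_eq, Complex.ofReal_eq_zero]
    positivity
  have h1 : ∀ᶠ s in 𝓝[≠] (0 : ℂ), (4 : ℂ) ^ s ≠ 1 := by
    filter_upwards [hw.eventually_ne (c := (4 : ℂ) ^ (0 : ℂ)) hlogne] with s hs
    rwa [hw0] at hs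
  have h2 : ∀ᶠ s in 𝓝[≠] (0 : ℂ), (4 : ℂ) ^ s ≠ 4 := by
    have : ∀ᶠ s in 𝓝 (0 : ℂ), (4 : ℂ) ^ s ≠ 4 := by
      have hc : ContinuousAt (fun s : ℂ => (4 : ℂ) ^ s) 0 := hw.continuousAt
      have : (fun s : ℂ => (4 : ℂ) ^ s) 0 ≠ 4 := by simp [hw0]
      exact hc.eventually_ne this
    exact this.filter_mono nhdsWithin_le_nhds
  have hev : (fun s => F s * h s) =ᶠ[𝓝[≠] (0 : ℂ)] (fun s => G s * h s) := by
    filter_upwards [h1, h2] with s hs1 hs4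
    have hs1' : (4 : ℂ) ^ s - 1 ≠ 0 := sub_ne_zero.mpr hs1
    have hs4' : (4 : ℂ) ^ s - 4 ≠ 0 := sub_ne_zero.mpr hs4
    rw [hG s]
    simp only [hFdef]
    field_simp
    ring
  constructor
  · have : Tendsto (fun s => F s * h s) (𝓝[≠] (0 : ℂ)) (𝓝 (2 / 3)) := by
      have := hfd.continuousAt.continuousWithinAt (s := {(0:ℂ)}ᶜ)
      rw [ContinuousWithinAt, hf0] at this
      exact this
    exact this.congr' hev
  · have hslope := hasDerivAt_iff_tendsto_slope.mp hfd
    have : Tendsto (fun s : ℂ => (F s * h s - 2 / 3) / s) (𝓝[≠] 0)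
        (𝓝 ((10 / 9 : ℂ) * Real.log 2)) := by
      refine hslope.congr ?_
      intro s
      rw [slope_def_field, hf0]
      simp [div_eq_mul_inv]
    refine this.congr' ?_
    filter_upwards [hev] with s hs
    rw [hs]
end

section
/- Let Φ : ℂ → ℂ satisfy Φ(5z) = Φ(z)·(5 + Φ(z)) for all z ∈ ℂ, and let s ∈ ℂ be such that the family μ ↦ μ^{-s} is summable over the set {μ ∈ ℝ : μ > 0, Φ(-μ) = 0}. Then ∑_{μ > 0, Φ(-μ) = -5} μ^{-s} = (5^s - 1) · ∑_{μ > 0, Φ(-μ) = 0} μ^{-s}. -/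
open Complex Set

/-- For the Sierpinski gasket: `ζ_{Φ,-5}(s) = (5^s - 1) · ζ_{Φ,0}(s)`, where
`ζ_{Φ,w}(s)` is the unconditional sum of `μ^{-s}` over `{μ > 0 : Φ(-μ) = w}`,
assuming summability of the family for `w = 0`. -/
theorem gasket_zeta_neg_five_eq (Φ : ℂ → ℂ)
    (hΦ : ∀ z : ℂ, Φ (5 * z) = Φ z * (5 + Φ z)) (s : ℂ)
    (hsum : Summable fun μ : {μ : ℝ // 0 < μ ∧ Φ (-(μ : ℂ)) = 0} =>
      ((μ : ℝ) : ℂ) ^ (-s)) :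
    (∑' μ : {μ : ℝ // 0 < μ ∧ Φ (-(μ : ℂ)) = -5}, ((μ : ℝ) : ℂ) ^ (-s))
      = ((5 : ℂ) ^ s - 1) *
        ∑' μ : {μ : ℝ // 0 < μ ∧ Φ (-(μ : ℂ)) = 0}, ((μ : ℝ) : ℂ) ^ (-s) := by
  classical
  set f : ℝ → ℂ := fun μ => ((μ : ℝ) : ℂ) ^ (-s) with hf
  set A : Set ℝ := {μ : ℝ | 0 < μ ∧ Φ (-(μ : ℂ)) = 0} with hA
  set B : Set ℝ := {μ : ℝ | 0 < μ ∧ Φ (-(μ : ℂ)) = -5} with hB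
  -- the map ν ↦ 5ν carries A ∪ B bijectively onto A
  have hmem : ∀ x : ℝ, x ∈ A ∪ B → (5 * x) ∈ A := by
    rintro x (⟨hx, h0⟩ | ⟨hx, h0⟩) <;>
    · refine ⟨by linarith, ?_⟩
      have hc : (-(((5 : ℝ) * x : ℝ) : ℂ)) = 5 * (-(x : ℂ)) := by push_cast; ring
      rw [hc, hΦ, h0]; ring
  have hAsub : ∀ x : ℝ, x ∈ A → x ∈ A ∪ B ∨ True := fun _ _ => Or.inr trivial
  have hbij : Function.Bijective (fun x : ↥(A ∪ B) => (⟨5 * x.1, hmem x.1 x.2⟩ : ↥A)) := by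
    constructor
    · rintro ⟨x, hx⟩ ⟨y, hy⟩ h
      have : (5 : ℝ) * x = 5 * y := congrArg Subtype.val h
      exact Subtype.ext (by linarith)
    · rintro ⟨y, hy, h0⟩
      refine ⟨⟨y / 5, ?_⟩, ?_⟩
      · have hy5 : (0 : ℝ) < y / 5 := by linarith
        have hc : (-((y : ℝ) : ℂ)) = 5 * (-(((y / 5 : ℝ) : ℝ) : ℂ)) := by
          push_cast; ring
        have h0' : Φ (-(((y / 5 : ℝ) : ℝ) : ℂ)) * (5 + Φ (-(((y / 5 : ℝ) : ℝ) : ℂ))) = 0 := by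
          rw [← hΦ, ← hc, h0]
        rcases mul_eq_zero.mp h0' with h | h
        · exact Or.inl ⟨hy5, h⟩
        · exact Or.inr ⟨hy5, by linear_combination h⟩
      · exact Subtype.ext (by simp; ring)
  set e : ↥(A ∪ B) ≃ ↥A := Equiv.ofBijective _ hbij with he
  -- transport the sum
  have hAs : Summable (f ∘ (↑) : ↥A → ℂ) := hsum
  have hsum' : Summable (fun x : ↥(A ∪ B) => f (5 * x.1)) := by
    have := e.summable_iff.mpr hAs
    exact this
  have hscale : ∀ x : ↥(A ∪ B), f (5 * x.1) = (5 : ℂ) ^ (-s) * f x.1 := by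
    rintro ⟨x, hx⟩
    have hx0 : (0 : ℝ) ≤ x := le_of_lt (by rcases hx with ⟨h, _⟩ | ⟨h, _⟩ <;> exact h)
    simp only [hf]
    rw [show (((5 : ℝ) * x : ℝ) : ℂ) = ((5 : ℝ) : ℂ) * ((x : ℝ) : ℂ) by push_cast; ring,
      mul_cpow_ofReal_nonneg (by norm_num) hx0]
    norm_num
  have hsumU : Summable (f ∘ (↑) : ↥(A ∪ B) → ℂ) := by
    have h1 : Summable (fun x : ↥(A ∪ B) => (5 : ℂ) ^ (-s) * f x.1) := by
      refine hsum'.congr fun x => (hscale x)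
    have h5 : ((5 : ℂ) ^ (-s)) ≠ 0 := by
      rw [Ne, Complex.cpow_eq_zero_iff]
      norm_num
    exact (summable_mul_left_iff h5).mp h1
  have hBs : Summable (f ∘ (↑) : ↥B → ℂ) := by
    have hinj : Function.Injective (Set.inclusion (Set.subset_union_right : B ⊆ A ∪ B)) :=
      Set.inclusion_injective _
    have := hsumU.comp_injective hinj
    exact this
  have hdisj : Disjoint A B := by
    rw [Set.disjoint_left]
    rintro x ⟨_, h0⟩ ⟨_, h5⟩
    rw [h0] at h5
    norm_num at h5
  -- the key identity
  have hkey : (∑' x : ↥A, f x.1) =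
      (5 : ℂ) ^ (-s) * ((∑' x : ↥A, f x.1) + ∑' x : ↥B, f x.1) := by
    calc (∑' x : ↥A, f x.1) = ∑' x : ↥(A ∪ B), f (5 * x.1) := (e.tsum_eq fun x : ↥A => f x.1).symm
    _ = ∑' x : ↥(A ∪ B), (5 : ℂ) ^ (-s) * f x.1 := tsum_congr hscale
    _ = (5 : ℂ) ^ (-s) * ∑' x : ↥(A ∪ B), f x.1 := tsum_mul_left
    _ = (5 : ℂ) ^ (-s) * ((∑' x : ↥A, f x.1) + ∑' x : ↥B, f x.1) := by
        rw [Summable.tsum_union_disjoint hdisj hAs hBs]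
  -- conclude
  have h5s : (5 : ℂ) ^ s * (5 : ℂ) ^ (-s) = 1 := by
    rw [← cpow_add _ _ (by norm_num : (5 : ℂ) ≠ 0)]
    simp
  show (∑' x : ↥B, f x.1) = ((5 : ℂ) ^ s - 1) * ∑' x : ↥A, f x.1
  set a := ∑' x : ↥A, f x.1
  set b := ∑' x : ↥B, f x.1
  linear_combination (-(5 : ℂ) ^ s) * hkey - (a + b) * h5s
end

section
/- For every s ∈ ℂ with Re(s) > log 3 / log 5, the series ∑_{n=1}^∞ (3^{n-1} + 1) · 5^{-ns} converges and equals (5^s + 3)/(2·5^s·(5^s - 3)) + (3·5^s - 1)/(2·5^s·(5^s - 1)). -/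
/-- For `Re(s) > log 3 / log 5`, the geometric coefficient of `ζ_{Φ,-5}` in the
spectral zeta function of the double Sierpinski gasket:
`∑_{n=1}^∞ (3^{n-1} + 1) · 5^{-ns}
  = (5^s + 3)/(2·5^s·(5^s - 3)) + (3·5^s - 1)/(2·5^s·(5^s - 1))`. -/
theorem double_gasket_coeff_neg_five (s : ℂ) (hs : Real.log 3 / Real.log 5 < s.re) :
    HasSum
      (fun n : ℕ => ((3 : ℂ) ^ n + 1) * (5 : ℂ) ^ (-(((n : ℂ) + 1) * s)))
      (((5 : ℂ) ^ s + 3) / (2 * (5 : ℂ) ^ s * ((5 : ℂ) ^ s - 3))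
        + (3 * (5 : ℂ) ^ s - 1) / (2 * (5 : ℂ) ^ s * ((5 : ℂ) ^ s - 1))) := by
  have h5 : (0:ℝ) < 5 := by norm_num
  have hlog5 : (0:ℝ) < Real.log 5 := Real.log_pos (by norm_num)
  have hrepos : 0 < s.re :=
    lt_trans (div_pos (Real.log_pos (by norm_num)) hlog5) hs
  have hre : (3:ℝ) < (5:ℝ) ^ s.re := by
    have h1 : Real.log 3 < s.re * Real.log 5 := (div_lt_iff₀ hlog5).mp hs
    rw [← Real.log_rpow h5 s.re] at h1
    exact (Real.log_lt_log_iff (by norm_num) (Real.rpow_pos_of_pos h5 _)).mp h1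
  set y : ℂ := (5:ℂ) ^ (-s) with hy
  have hnormy : ‖y‖ = (5:ℝ) ^ (-s.re) := by
    rw [hy]
    have h5c : ((5:ℝ):ℂ) = (5:ℂ) := by norm_num
    rw [← h5c, Complex.norm_cpow_eq_rpow_re_of_pos h5]
    simp
  have hy1 : ‖y‖ < 1 := by
    rw [hnormy]
    exact Real.rpow_lt_one_of_one_lt_of_neg (by norm_num) (by linarith)
  have hx : ‖(3:ℂ) * y‖ < 1 := by
    rw [norm_mul, hnormy]
    have : ‖(3:ℂ)‖ = 3 := by norm_num
    rw [this, Real.rpow_neg h5.le, ← div_eq_mul_inv]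
    exact (div_lt_one (Real.rpow_pos_of_pos h5 _)).mpr hre
  have h1 : HasSum (fun n : ℕ => ((3:ℂ)*y)^n) (1 - 3*y)⁻¹ :=
    hasSum_geometric_of_norm_lt_one hx
  have h2 : HasSum (fun n : ℕ => y^n) (1 - y)⁻¹ :=
    hasSum_geometric_of_norm_lt_one hy1
  have hsum : HasSum (fun n : ℕ => y * (((3:ℂ)*y)^n + y^n))
      (y * ((1 - 3*y)⁻¹ + (1 - y)⁻¹)) := (h1.add h2).mul_left y
  have hfun : (fun n : ℕ => ((3 : ℂ) ^ n + 1) * (5 : ℂ) ^ (-(((n : ℂ) + 1) * s)))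
      = fun n : ℕ => y * (((3:ℂ)*y)^n + y^n) := by
    funext n
    have e1 : -(((n : ℂ) + 1) * s) = ((n + 1 : ℕ) : ℂ) * (-s) := by push_cast; ring
    rw [e1, Complex.cpow_nat_mul, ← hy, pow_succ]
    ring
  rw [hfun]
  convert hsum using 1
  -- algebraic identity
  have ha : (5:ℂ) ^ s ≠ 0 := by
    intro h
    have : ‖(5:ℂ) ^ s‖ = (5:ℝ) ^ s.re := by
      have h5c : ((5:ℝ):ℂ) = (5:ℂ) := by norm_num
      rw [← h5c, Complex.norm_cpow_eq_rpow_re_of_pos h5]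
    rw [h, norm_zero] at this
    exact absurd this.symm (ne_of_gt (Real.rpow_pos_of_pos h5 _))
  have hnorma : ‖(5:ℂ) ^ s‖ = (5:ℝ) ^ s.re := by
    have h5c : ((5:ℝ):ℂ) = (5:ℂ) := by norm_num
    rw [← h5c, Complex.norm_cpow_eq_rpow_re_of_pos h5]
  have ha3 : (5:ℂ) ^ s - 3 ≠ 0 := by
    intro h
    have h' : (5:ℂ) ^ s = 3 := by linear_combination h
    rw [h'] at hnorma
    simp at hnorma
    linarith
  have ha1 : (5:ℂ) ^ s - 1 ≠ 0 := by
    intro h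
    have h' : (5:ℂ) ^ s = 1 := by linear_combination h
    rw [h'] at hnorma
    simp at hnorma
    nlinarith
  have hyinv : y = ((5:ℂ) ^ s)⁻¹ := by rw [hy, Complex.cpow_neg]
  rw [hyinv]
  have h3y : 1 - 3 * ((5:ℂ)^s)⁻¹ ≠ 0 := by
    intro h
    apply ha3
    field_simp at h
    linear_combination h
  have h1y : 1 - ((5:ℂ)^s)⁻¹ ≠ 0 := by
    intro h
    apply ha1
    field_simp at h
    linear_combination h
  field_simp
  ring
end

section
/- Let f₂, f₃, f₀ : ℂ → ℂ be differentiable at 0 with f₂(0) = 0, f₂'(0) = log 2, f₃(0) = 0, f₃'(0) = log 3, f₀(0) = 1, f₀'(0) = 0. Define F : ℂ → ℂ by F(s) = 5^{-s}·f₂(s) + [ (3 + 5^s)/(2·5^s·(5^s - 3)) + 3/(2·5^s) ]·f₃(s) + [ (5^s + 3)·(5^s - 1)/(2·5^s·(5^s - 3)) + (3·5^s - 1)/(2·5^s) ]·f₀(s). Then F(0) = 1 and F is differentiable at 0 with F'(0) = log 2 + (1/2)·log 3 - (1/2)·log 5. -/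
/-- The spectral zeta function of the double Sierpinski gasket, written with the
pole at `s = 0` removed, where `f₂, f₃, f₀` play the roles of the polynomial zeta
functions `ζ_{Φ,-2}, ζ_{Φ,-3}, ζ_{Φ,0}`, satisfies `F(0) = 1` and
`F'(0) = log 2 + (1/2)·log 3 - (1/2)·log 5`. -/
theorem double_gasket_zeta_at_zero (f₂ f₃ f₀ F : ℂ → ℂ)
    (hd₂ : DifferentiableAt ℂ f₂ 0) (h₂0 : f₂ 0 = 0) (h₂' : deriv f₂ 0 = Real.log 2)
    (hd₃ : DifferentiableAt ℂ f₃ 0) (h₃0 : f₃ 0 = 0) (h₃' : deriv f₃ 0 = Real.log 3)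
    (hd₀ : DifferentiableAt ℂ f₀ 0) (h₀0 : f₀ 0 = 1) (h₀' : deriv f₀ 0 = 0)
    (hF : ∀ s : ℂ, F s = (5 : ℂ) ^ (-s) * f₂ s
      + ((3 + (5 : ℂ) ^ s) / (2 * (5 : ℂ) ^ s * ((5 : ℂ) ^ s - 3))
          + 3 / (2 * (5 : ℂ) ^ s)) * f₃ s
      + (((5 : ℂ) ^ s + 3) * ((5 : ℂ) ^ s - 1) / (2 * (5 : ℂ) ^ s * ((5 : ℂ) ^ s - 3))
          + (3 * (5 : ℂ) ^ s - 1) / (2 * (5 : ℂ) ^ s)) * f₀ s) :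
    F 0 = 1 ∧ DifferentiableAt ℂ F 0 ∧
      deriv F 0 = Real.log 2 + (1 / 2) * Real.log 3 - (1 / 2) * Real.log 5 := by
  have hFeq : F = fun s => (5 : ℂ) ^ (-s) * f₂ s
      + ((3 + (5 : ℂ) ^ s) / (2 * (5 : ℂ) ^ s * ((5 : ℂ) ^ s - 3))
          + 3 / (2 * (5 : ℂ) ^ s)) * f₃ s
      + (((5 : ℂ) ^ s + 3) * ((5 : ℂ) ^ s - 1) / (2 * (5 : ℂ) ^ s * ((5 : ℂ) ^ s - 3))
          + (3 * (5 : ℂ) ^ s - 1) / (2 * (5 : ℂ) ^ s)) * f₀ s := funext hF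
  subst hFeq
  have h5 : (5:ℂ) ≠ 0 := by norm_num
  have hg : HasDerivAt (fun s : ℂ => (5:ℂ)^s) (Complex.log 5) 0 := by
    simpa using (Complex.hasStrictDerivAt_const_cpow (x := (5:ℂ)) (y := (0:ℂ)) (Or.inl h5)).hasDerivAt
  have hgn : HasDerivAt (fun s : ℂ => (5:ℂ)^(-s)) (-Complex.log 5) 0 := by
    have h := (neg_zero (G := ℂ) ▸ hg).comp (0:ℂ) (hasDerivAt_neg (0:ℂ))
    simpa [Function.comp_def, mul_comm] using h
  have hden1 : (2:ℂ) * (5:ℂ)^(0:ℂ) * ((5:ℂ)^(0:ℂ) - 3) ≠ 0 := by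
    simp [Complex.cpow_zero]; norm_num
  have hden2 : (2:ℂ) * (5:ℂ)^(0:ℂ) ≠ 0 := by
    simp [Complex.cpow_zero]
  have hden1' : HasDerivAt (fun s : ℂ => 2 * (5:ℂ)^s * ((5:ℂ)^s - 3))
      (2 * Complex.log 5 * ((5:ℂ)^(0:ℂ) - 3) + 2 * (5:ℂ)^(0:ℂ) * Complex.log 5) 0 := by
    have := (((hasDerivAt_const (0:ℂ) (2:ℂ)).mul hg).mul (hg.sub (hasDerivAt_const (0:ℂ) (3:ℂ))))
    simpa [Pi.mul_def, Pi.add_def, Pi.sub_def] using this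
  have hden2' : HasDerivAt (fun s : ℂ => 2 * (5:ℂ)^s) (2 * Complex.log 5) 0 := by
    simpa [Pi.mul_def] using (hasDerivAt_const (0:ℂ) (2:ℂ)).mul hg
  have hnum1 : HasDerivAt (fun s : ℂ => 3 + (5:ℂ)^s) (Complex.log 5) 0 := by
    simpa [Pi.add_def] using (hasDerivAt_const (0:ℂ) (3:ℂ)).add hg
  have hnum2 : HasDerivAt (fun s : ℂ => ((5:ℂ)^s + 3) * ((5:ℂ)^s - 1))
      (Complex.log 5 * ((5:ℂ)^(0:ℂ) - 1) + ((5:ℂ)^(0:ℂ) + 3) * Complex.log 5) 0 := by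
    have := (hg.add (hasDerivAt_const (0:ℂ) (3:ℂ))).mul (hg.sub (hasDerivAt_const (0:ℂ) (1:ℂ)))
    simpa [Pi.mul_def, Pi.add_def, Pi.sub_def] using this
  have hnum3 : HasDerivAt (fun s : ℂ => 3 * (5:ℂ)^s - 1) (3 * Complex.log 5) 0 := by
    simpa [Pi.mul_def, Pi.sub_def] using ((hasDerivAt_const (0:ℂ) (3:ℂ)).mul hg).sub (hasDerivAt_const (0:ℂ) (1:ℂ))
  have big := ((hgn.mul hd₂.hasDerivAt).add
      (((hnum1.div hden1' hden1).add ((hasDerivAt_const (0:ℂ) (3:ℂ)).div hden2' hden2)).mul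
        hd₃.hasDerivAt)).add
      (((hnum2.div hden1' hden1).add (hnum3.div hden2' hden2)).mul hd₀.hasDerivAt)
  have hlog5 : Complex.log 5 = (Real.log 5 : ℂ) := by
    rw [show (5:ℂ) = ((5:ℝ):ℂ) by norm_num, Complex.ofReal_log (by norm_num : (0:ℝ) ≤ 5)]
  have hD : HasDerivAt (fun s => (5 : ℂ) ^ (-s) * f₂ s
      + ((3 + (5 : ℂ) ^ s) / (2 * (5 : ℂ) ^ s * ((5 : ℂ) ^ s - 3))
          + 3 / (2 * (5 : ℂ) ^ s)) * f₃ s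
      + (((5 : ℂ) ^ s + 3) * ((5 : ℂ) ^ s - 1) / (2 * (5 : ℂ) ^ s * ((5 : ℂ) ^ s - 3))
          + (3 * (5 : ℂ) ^ s - 1) / (2 * (5 : ℂ) ^ s)) * f₀ s)
      ((Real.log 2 : ℂ) + (1 / 2) * Real.log 3 - (1 / 2) * Real.log 5) 0 := by
    refine big.congr_deriv ?_
    simp only [Complex.cpow_zero, neg_zero, h₂0, h₃0, h₀0, h₂', h₃', h₀', hlog5, Pi.add_apply, Pi.div_apply]
    ring
  refine ⟨?_, hD.differentiableAt, ?_⟩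
  · simp [Complex.cpow_zero, h₂0, h₃0, h₀0]
    norm_num
  · exact hD.deriv
end

section
/- Let p be a real number with 0 < p < 1 and p ≠ 1/2, q = 1 - p, λ = 1 + 2/(pq), and let Φ : ℂ → ℂ satisfy Φ(λz) = (1/(pq))·Φ(z)·(Φ(z)²/4 + (3/2)Φ(z) + 2 + pq) for all z ∈ ℂ. Let s ∈ ℂ be such that the family μ ↦ μ^{-s} is summable over the set {μ ∈ ℝ : μ > 0, Φ(-μ) = 0}. Then ∑_{μ > 0, Φ(-μ) = -2-2p} μ^{-s} + ∑_{μ > 0, Φ(-μ) = -2-2q} μ^{-s} = (λ^s - 1) · ∑_{μ > 0, Φ(-μ) = 0} μ^{-s}. -/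
/-- For the pq-model with `p ≠ 1/2` and `λ = 1 + 2/(pq)`:
`ζ_{Φ,-2-2p}(s) + ζ_{Φ,-2-2q}(s) = (λ^s - 1)·ζ_{Φ,0}(s)`, where `ζ_{Φ,w}(s)` is
the unconditional sum of `μ^{-s}` over `{μ > 0 : Φ(-μ) = w}`, assuming summability
of the family for `w = 0`. -/
theorem pq_zeta_cancellation_zero (p : ℝ) (hp0 : 0 < p) (hp1 : p < 1)
    (hp : p ≠ 1 / 2) (q : ℝ) (hq : q = 1 - p)
    (lam : ℝ) (hlam : lam = 1 + 2 / (p * q)) (Φ : ℂ → ℂ)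
    (hΦ : ∀ z : ℂ, Φ ((lam : ℂ) * z) =
      (1 / ((p : ℂ) * q)) * Φ z * ((Φ z) ^ 2 / 4 + (3 / 2) * Φ z + 2 + (p : ℂ) * q))
    (s : ℂ)
    (hsum : Summable fun μ : {μ : ℝ // 0 < μ ∧ Φ (-(μ : ℂ)) = 0} =>
      ((μ : ℝ) : ℂ) ^ (-s)) :
    (∑' μ : {μ : ℝ // 0 < μ ∧ Φ (-(μ : ℂ)) = -2 - 2 * p}, ((μ : ℝ) : ℂ) ^ (-s))
      + (∑' μ : {μ : ℝ // 0 < μ ∧ Φ (-(μ : ℂ)) = -2 - 2 * q}, ((μ : ℝ) : ℂ) ^ (-s))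
      = (((lam : ℂ)) ^ s - 1) *
        ∑' μ : {μ : ℝ // 0 < μ ∧ Φ (-(μ : ℂ)) = 0}, ((μ : ℝ) : ℂ) ^ (-s) := by
  have hq0 : 0 < q := by rw [hq]; linarith
  have hpq0 : 0 < p * q := mul_pos hp0 hq0
  have hlam1 : 1 < lam := by rw [hlam]; have := div_pos (by norm_num : (0:ℝ) < 2) hpq0; linarith
  have hlam0 : 0 < lam := by linarith
  have hlamC0 : ((lam : ℝ) : ℂ) ≠ 0 := by
    simpa using ne_of_gt hlam0
  have hPQ : ((p : ℂ)) * (q : ℂ) ≠ 0 := by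
    have : ((p*q : ℝ) : ℂ) ≠ 0 := by simpa using ne_of_gt hpq0
    simpa using this
  have hQC : ((q : ℝ) : ℂ) = 1 - (p : ℂ) := by rw [hq]; push_cast; ring
  -- the zero set of the decimation polynomial
  have key : ∀ w : ℂ, (1 / ((p : ℂ) * q)) * w * (w ^ 2 / 4 + (3 / 2) * w + 2 + (p : ℂ) * q) = 0
      ↔ w = 0 ∨ w = -2 - 2 * p ∨ w = -2 - 2 * q := by
    intro w
    have hfac : (1 / ((p : ℂ) * q)) * w * (w ^ 2 / 4 + (3 / 2) * w + 2 + (p : ℂ) * q)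
        = (1 / (4 * ((p : ℂ) * q))) * (w * ((w - (-2 - 2 * p)) * (w - (-2 - 2 * q)))) := by
      have hP : ((p:ℝ):ℂ) ≠ 0 := by simpa using ne_of_gt hp0
      have h1P : (1:ℂ) - (p:ℝ) ≠ 0 := by
        rw [← hQC]; simpa using ne_of_gt hq0
      rw [hQC]
      field_simp
      ring
    rw [hfac, mul_eq_zero, mul_eq_zero, mul_eq_zero]
    constructor
    · rintro (h | h | h | h)
      · exact absurd h (one_div_ne_zero (by simpa using mul_ne_zero (by norm_num : (4:ℂ) ≠ 0) hPQ))
      · exact Or.inl h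
      · exact Or.inr (Or.inl (by linear_combination h))
      · exact Or.inr (Or.inr (by linear_combination h))
    · rintro (h | h | h)
      · exact Or.inr (Or.inl h)
      · exact Or.inr (Or.inr (Or.inl (by linear_combination h)))
      · exact Or.inr (Or.inr (Or.inr (by linear_combination h)))
  -- sets
  set f : ℝ → ℂ := fun μ => ((μ : ℝ) : ℂ) ^ (-s) with hf
  set S0 : Set ℝ := {μ | 0 < μ ∧ Φ (-(μ : ℂ)) = 0} with hS0
  set Sa : Set ℝ := {μ | 0 < μ ∧ Φ (-(μ : ℂ)) = -2 - 2 * p} with hSa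
  set Sb : Set ℝ := {μ | 0 < μ ∧ Φ (-(μ : ℂ)) = -2 - 2 * q} with hSb
  set T : Set ℝ := {μ | 0 < μ ∧ (Φ (-(μ : ℂ)) = 0 ∨ Φ (-(μ : ℂ)) = -2 - 2 * p ∨
    Φ (-(μ : ℂ)) = -2 - 2 * q)} with hT
  have hmem : ∀ μ : ℝ, 0 < μ → (Φ (-((lam * μ : ℝ) : ℂ)) = 0 ↔
      (Φ (-(μ : ℂ)) = 0 ∨ Φ (-(μ : ℂ)) = -2 - 2 * p ∨ Φ (-(μ : ℂ)) = -2 - 2 * q)) := by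
    intro μ _
    have : -(((lam * μ : ℝ)) : ℂ) = (lam : ℂ) * (-(μ : ℂ)) := by push_cast; ring
    rw [this, hΦ (-(μ:ℂ)), key]
  -- equivalence between T and S0 via multiplication by lam
  have hlamne : lam ≠ 0 := ne_of_gt hlam0
  let e : T ≃ S0 :=
    { toFun := fun μ => ⟨lam * μ, mul_pos hlam0 μ.2.1, (hmem μ μ.2.1).mpr μ.2.2⟩
      invFun := fun ν => ⟨ν / lam, div_pos ν.2.1 hlam0, by
        have h1 : (0:ℝ) < (ν:ℝ)/lam := div_pos ν.2.1 hlam0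
        have h2 : lam * ((ν:ℝ)/lam) = ν := by field_simp
        have := (hmem ((ν:ℝ)/lam) h1).mp (by rw [h2]; exact ν.2.2)
        exact this⟩
      left_inv := fun μ => by
        ext
        show lam * μ / lam = μ
        field_simp
      right_inv := fun ν => by
        ext
        show lam * ((ν:ℝ) / lam) = ν
        field_simp }
  -- cpow facts
  have hcpow : ∀ μ : ℝ, 0 < μ → f (lam * μ) = ((lam:ℝ):ℂ)^(-s) * f μ := by
    intro μ hμ
    simp only [hf]
    push_cast
    exact Complex.mul_cpow_ofReal_nonneg hlam0.le hμ.le (-s)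
  have hcomp : (fun μ : T => f (e μ)) = fun μ : T => ((lam:ℝ):ℂ)^(-s) * f μ := by
    funext μ
    exact hcpow μ μ.2.1
  have hlamS : ((lam:ℝ):ℂ)^(-s) ≠ 0 := by
    rw [Complex.cpow_neg]
    refine inv_ne_zero fun h => ?_
    exact hlamC0 ((Complex.cpow_eq_zero_iff _ _).mp h).1
  -- nonzero/distinct values
  have ha0 : (-2 - 2 * (p:ℂ)) ≠ 0 := by
    have h1 : ((-2 - 2*p : ℝ) : ℂ) = -2 - 2*(p:ℂ) := by push_cast; ring
    rw [← h1, Complex.ofReal_ne_zero]; nlinarith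
  have hb0 : (-2 - 2 * (q:ℂ)) ≠ 0 := by
    have h1 : ((-2 - 2*q : ℝ) : ℂ) = -2 - 2*(q:ℂ) := by push_cast; ring
    rw [← h1, Complex.ofReal_ne_zero]; nlinarith
  have hab : (-2 - 2 * (p:ℂ)) ≠ -2 - 2 * (q:ℂ) := by
    intro h
    have h1 : ((-2 - 2*p : ℝ) : ℂ) = ((-2 - 2*q : ℝ) : ℂ) := by push_cast at h ⊢; linear_combination h
    have h2 : -2 - 2*p = -2 - 2*q := Complex.ofReal_injective h1
    apply hp
    rw [hq] at h2; linarith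
  -- disjointness
  have hd0a : Disjoint S0 Sa := Set.disjoint_left.mpr fun μ h0 ha => ha0 (ha.2.symm.trans h0.2)
  have hd0b : Disjoint S0 Sb := Set.disjoint_left.mpr fun μ h0 hb => hb0 (hb.2.symm.trans h0.2)
  have hdab : Disjoint Sa Sb := Set.disjoint_left.mpr fun μ ha hb => hab (ha.2.symm.trans hb.2)
  have hdUb : Disjoint (S0 ∪ Sa) Sb := Set.disjoint_union_left.mpr ⟨hd0b, hdab⟩
  have hTU : T = (S0 ∪ Sa) ∪ Sb := by
    ext μ
    simp only [hT, hS0, hSa, hSb, Set.mem_union, Set.mem_setOf_eq]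
    tauto
  -- summability over T and over the pieces
  have hsumS0 : Summable (f ∘ ((↑) : S0 → ℝ)) := hsum
  have hsumT : Summable (f ∘ ((↑) : T → ℝ)) := by
    have h1 : Summable fun μ : T => f (e μ) :=
      (e.summable_iff (f := fun ν : S0 => f ν)).mpr hsumS0
    rw [hcomp] at h1
    exact (summable_mul_left_iff hlamS).mp h1
  have hindT : Summable (T.indicator f) := summable_subtype_iff_indicator.mp hsumT
  have hsub : ∀ U : Set ℝ, U ⊆ T → Summable (f ∘ ((↑) : U → ℝ)) := by
    intro U hU
    refine summable_subtype_iff_indicator.mpr ?_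
    have h1 := hindT.indicator U
    rwa [Set.indicator_indicator, Set.inter_eq_left.mpr hU] at h1
  have hsumA := hsub Sa (by rw [hTU]; exact fun μ h => Or.inl (Or.inr h))
  have hsumB := hsub Sb (by rw [hTU]; exact fun μ h => Or.inr h)
  have hsumUA := hsub (S0 ∪ Sa) (by rw [hTU]; exact Set.subset_union_left)
  -- split the sum over T
  have hsplit : (∑' μ : T, f μ) = (∑' μ : S0, f μ) + (∑' μ : Sa, f μ) + (∑' μ : Sb, f μ) := by
    rw [hTU, Summable.tsum_union_disjoint hdUb hsumUA hsumB, Summable.tsum_union_disjoint hd0a hsumS0 hsumA]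
  -- the decimation identity for the zeta functions
  have hkey : (∑' ν : S0, f ν) = ((lam:ℝ):ℂ)^(-s) * ∑' μ : T, f μ := by
    calc (∑' ν : S0, f ν) = ∑' μ : T, f (e μ) := (e.tsum_eq (fun ν : S0 => f ν)).symm
      _ = ∑' μ : T, ((lam:ℝ):ℂ)^(-s) * f μ := by rw [hcomp]
      _ = ((lam:ℝ):ℂ)^(-s) * ∑' μ : T, f μ := tsum_mul_left
  have hinv : ((lam:ℝ):ℂ)^s * ((lam:ℝ):ℂ)^(-s) = 1 := by
    rw [← Complex.cpow_add _ _ hlamC0]; simp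
  have hA : (∑' μ : {μ : ℝ // 0 < μ ∧ Φ (-(μ : ℂ)) = -2 - 2 * p}, ((μ : ℝ) : ℂ) ^ (-s))
      = ∑' μ : Sa, f μ := rfl
  have hB : (∑' μ : {μ : ℝ // 0 < μ ∧ Φ (-(μ : ℂ)) = -2 - 2 * q}, ((μ : ℝ) : ℂ) ^ (-s))
      = ∑' μ : Sb, f μ := rfl
  have hZ : (∑' μ : {μ : ℝ // 0 < μ ∧ Φ (-(μ : ℂ)) = 0}, ((μ : ℝ) : ℂ) ^ (-s))
      = ∑' μ : S0, f μ := rfl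
  rw [hA, hB, hZ]
  have hmain : ((lam:ℝ):ℂ)^s * (∑' μ : S0, f μ)
      = (∑' μ : S0, f μ) + (∑' μ : Sa, f μ) + (∑' μ : Sb, f μ) := by
    rw [← hsplit, hkey, ← mul_assoc, hinv, one_mul]
  linear_combination -hmain
end

section
/- Let p be a real number with 0 < p < 1 and p ≠ 1/2, q = 1 - p, λ = 1 + 2/(pq), and let Φ : ℂ → ℂ satisfy Φ(λz) = (1/(pq))·Φ(z)·(Φ(z)²/4 + (3/2)Φ(z) + 2 + pq) for all z ∈ ℂ. Let s ∈ ℂ be such that the family μ ↦ μ^{-s} is summable over the set {μ ∈ ℝ : μ > 0, Φ(-μ) = -4}. Then ∑_{μ > 0, Φ(-μ) = -2+2p} μ^{-s} + ∑_{μ > 0, Φ(-μ) = -2+2q} μ^{-s} = (λ^s - 1) · ∑_{μ > 0, Φ(-μ) = -4} μ^{-s}. -/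
/-- For the pq-model with `p ≠ 1/2` and `λ = 1 + 2/(pq)`:
`ζ_{Φ,-2+2p}(s) + ζ_{Φ,-2+2q}(s) = (λ^s - 1)·ζ_{Φ,-4}(s)`, where `ζ_{Φ,w}(s)` is
the unconditional sum of `μ^{-s}` over `{μ > 0 : Φ(-μ) = w}`, assuming summability
of the family for `w = -4`. -/
theorem pq_zeta_cancellation_neg_four (p : ℝ) (hp0 : 0 < p) (hp1 : p < 1)
    (hp : p ≠ 1 / 2) (q : ℝ) (hq : q = 1 - p)
    (lam : ℝ) (hlam : lam = 1 + 2 / (p * q)) (Φ : ℂ → ℂ)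
    (hΦ : ∀ z : ℂ, Φ ((lam : ℂ) * z) =
      (1 / ((p : ℂ) * q)) * Φ z * ((Φ z) ^ 2 / 4 + (3 / 2) * Φ z + 2 + (p : ℂ) * q))
    (s : ℂ)
    (hsum : Summable fun μ : {μ : ℝ // 0 < μ ∧ Φ (-(μ : ℂ)) = -4} =>
      ((μ : ℝ) : ℂ) ^ (-s)) :
    (∑' μ : {μ : ℝ // 0 < μ ∧ Φ (-(μ : ℂ)) = -2 + 2 * p}, ((μ : ℝ) : ℂ) ^ (-s))
      + (∑' μ : {μ : ℝ // 0 < μ ∧ Φ (-(μ : ℂ)) = -2 + 2 * q}, ((μ : ℝ) : ℂ) ^ (-s))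
      = (((lam : ℂ)) ^ s - 1) *
        ∑' μ : {μ : ℝ // 0 < μ ∧ Φ (-(μ : ℂ)) = -4}, ((μ : ℝ) : ℂ) ^ (-s) := by
  have hq0 : 0 < q := by rw [hq]; linarith
  have hpq0 : 0 < p * q := mul_pos hp0 hq0
  have hlam0 : 0 < lam := by
    have h2 : 0 < 2 / (p * q) := div_pos (by norm_num) hpq0
    rw [hlam]; linarith
  have hlamne : (lam : ℂ) ≠ 0 := by exact_mod_cast hlam0.ne'
  have hpqC : (p : ℂ) * q ≠ 0 := by exact_mod_cast hpq0.ne'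
  have hqC : (q : ℂ) = 1 - p := by rw [hq]; push_cast; ring
  -- root characterization of R_p(w) = -4
  have hfac : ∀ u : ℂ, (1 / ((p : ℂ) * q)) * u * (u ^ 2 / 4 + (3 / 2) * u + 2 + (p : ℂ) * q)
      - (-4) = (u - (-4)) * (u - (-2 + 2 * p)) * (u - (-2 + 2 * q)) / (4 * ((p : ℂ) * q)) := by
    intro u
    have h1 : (u - (-4)) * (u - (-2 + 2 * (p : ℂ))) * (u - (-2 + 2 * (q : ℂ)))
        = (u + 4) * (u ^ 2 + 2 * u + 4 * ((p : ℂ) * q)) := by rw [hqC]; ring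
    rw [h1, eq_div_iff (mul_ne_zero (by norm_num : (4 : ℂ) ≠ 0) hpqC)]
    linear_combination (u ^ 3 + 6 * u ^ 2 + 8 * u + 4 * u * ((p : ℂ) * q)) * inv_mul_cancel₀ hpqC
  have key : ∀ w : ℂ, (1 / ((p : ℂ) * q)) * w * (w ^ 2 / 4 + (3 / 2) * w + 2 + (p : ℂ) * q)
      = -4 ↔ (w = -4 ∨ w = -2 + 2 * p ∨ w = -2 + 2 * q) := by
    intro w
    constructor
    · intro h
      have h1 := hfac w
      rw [h, sub_self] at h1
      have h2 := h1.symm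
      rw [div_eq_zero_iff] at h2
      rcases h2 with h2 | h2
      · rcases mul_eq_zero.1 h2 with h3 | h3
        · rcases mul_eq_zero.1 h3 with h4 | h4
          · exact Or.inl (sub_eq_zero.1 h4)
          · exact Or.inr (Or.inl (sub_eq_zero.1 h4))
        · exact Or.inr (Or.inr (sub_eq_zero.1 h3))
      · exact absurd h2 (by simpa using hpqC)
    · intro h
      have h0 : (w - (-4)) * (w - (-2 + 2 * (p : ℂ))) * (w - (-2 + 2 * (q : ℂ))) = 0 := by
        rcases h with h | h | h <;> rw [h] <;> ring
      have h1 := hfac w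
      rw [h0, zero_div, sub_eq_zero] at h1
      exact h1
  -- sets
  set S4 : Set ℝ := {μ : ℝ | 0 < μ ∧ Φ (-(μ : ℂ)) = -4} with hS4
  set Sp : Set ℝ := {μ : ℝ | 0 < μ ∧ Φ (-(μ : ℂ)) = -2 + 2 * p} with hSp
  set Sq : Set ℝ := {μ : ℝ | 0 < μ ∧ Φ (-(μ : ℂ)) = -2 + 2 * q} with hSq
  set T : Set ℝ := {μ : ℝ | 0 < μ ∧ Φ (-((lam * μ : ℝ) : ℂ)) = -4} with hT
  set f : ℝ → ℂ := fun μ => ((μ : ℝ) : ℂ) ^ (-s) with hf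
  -- decomposition of T
  have hTdec : T = S4 ∪ (Sp ∪ Sq) := by
    ext μ
    simp only [hT, hS4, hSp, hSq, Set.mem_setOf_eq, Set.mem_union]
    have hc : -((lam * μ : ℝ) : ℂ) = (lam : ℂ) * (-(μ : ℂ)) := by push_cast; ring
    constructor
    · rintro ⟨hμ, hv⟩
      rw [hc, hΦ] at hv
      rcases (key _).1 hv with h | h | h
      · exact Or.inl ⟨hμ, h⟩
      · exact Or.inr (Or.inl ⟨hμ, h⟩)
      · exact Or.inr (Or.inr ⟨hμ, h⟩)
    · intro h
      rcases h with ⟨hμ, hv⟩ | ⟨hμ, hv⟩ | ⟨hμ, hv⟩ <;>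
        exact ⟨hμ, by rw [hc, hΦ]; exact (key _).2 (by tauto)⟩
  -- disjointness
  have hne1 : (-4 : ℂ) ≠ -2 + 2 * (p : ℝ) := by
    intro h
    have hpe : (p : ℝ) = -1 := by
      exact_mod_cast (by linear_combination -h / 2 : ((p : ℝ) : ℂ) = -1)
    linarith
  have hne2 : (-4 : ℂ) ≠ -2 + 2 * (q : ℝ) := by
    intro h
    have hqe : (q : ℝ) = -1 := by
      exact_mod_cast (by linear_combination -h / 2 : ((q : ℝ) : ℂ) = -1)
    linarith
  have hne3 : (-2 + 2 * ((p : ℝ) : ℂ)) ≠ -2 + 2 * ((q : ℝ) : ℂ) := by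
    intro h
    have hpe : (p : ℝ) = q := by
      exact_mod_cast (by linear_combination h / 2 : ((p : ℝ) : ℂ) = ((q : ℝ) : ℂ))
    rw [hq] at hpe; apply hp; linarith
  have hd1 : Disjoint S4 (Sp ∪ Sq) := by
    rw [Set.disjoint_union_right]
    constructor <;> rw [Set.disjoint_left] <;> rintro μ ⟨_, h1⟩ ⟨_, h2⟩
    · exact hne1 (h1 ▸ h2 ▸ rfl)
    · exact hne2 (h1 ▸ h2 ▸ rfl)
  have hd2 : Disjoint Sp Sq := by
    rw [Set.disjoint_left]; rintro μ ⟨_, h1⟩ ⟨_, h2⟩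
    exact hne3 (h1 ▸ h2 ▸ rfl)
  have hmul : (lam : ℂ) ^ s * (lam : ℂ) ^ (-s) = 1 := by
    rw [← Complex.cpow_add _ _ hlamne, add_neg_cancel, Complex.cpow_zero]
  -- equivalence T ≃ S4 via ν ↦ lam * ν
  let e : T ≃ S4 :=
    { toFun := fun ν => ⟨lam * ν.1, mul_pos hlam0 ν.2.1, ν.2.2⟩
      invFun := fun μ => ⟨μ.1 / lam, div_pos μ.2.1 hlam0,
        by
          have h : lam * (μ.1 / lam) = μ.1 := by field_simp
          show Φ (-((lam * (μ.1 / lam) : ℝ) : ℂ)) = -4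
          rw [h]; exact μ.2.2⟩
      left_inv := fun ν => by
        apply Subtype.ext
        show lam * ν.1 / lam = ν.1
        field_simp
      right_inv := fun μ => by
        apply Subtype.ext
        show lam * (μ.1 / lam) = μ.1
        field_simp }
  -- scaling
  have hfm : ∀ ν : T, f (lam * ν.1) = (lam : ℂ) ^ (-s) * f ν.1 := by
    rintro ⟨ν, hν, -⟩
    show ((lam * ν : ℝ) : ℂ) ^ (-s) = ((lam : ℝ) : ℂ) ^ (-s) * ((ν : ℝ) : ℂ) ^ (-s)
    push_cast
    exact Complex.mul_cpow_ofReal_nonneg hlam0.le hν.le (-s)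
  have hsum4 : Summable (f ∘ (Subtype.val : S4 → ℝ)) := hsum
  -- summability over T
  have hsumT : Summable (f ∘ (Subtype.val : T → ℝ)) := by
    have hi : Function.Injective (fun ν : T => (⟨lam * ν.1, mul_pos hlam0 ν.2.1, ν.2.2⟩ : S4)) := by
      intro a b hab
      apply Subtype.ext
      have := congrArg Subtype.val hab
      exact mul_left_cancel₀ hlam0.ne' this
    have h0 : Summable ((f ∘ (Subtype.val : S4 → ℝ)) ∘
        (fun ν : T => (⟨lam * ν.1, mul_pos hlam0 ν.2.1, ν.2.2⟩ : S4))) :=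
      hsum4.comp_injective hi
    have h1 : Summable (fun ν : T => (lam : ℂ) ^ s * f (lam * ν.1)) := h0.mul_left _
    have h2 : (fun ν : T => (lam : ℂ) ^ s * f (lam * ν.1)) = f ∘ (Subtype.val : T → ℝ) := by
      funext ν
      show (lam : ℂ) ^ s * f (lam * ν.1) = f ν.1
      rw [hfm ν, ← mul_assoc, hmul, one_mul]
    rwa [h2] at h1
  -- summability on subsets of T
  have hsub : ∀ u : Set ℝ, u ⊆ T → Summable (f ∘ (Subtype.val : u → ℝ)) := by
    intro u hu
    rw [summable_subtype_iff_indicator]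
    have h := (summable_subtype_iff_indicator.mp hsumT).indicator u
    rwa [Set.indicator_indicator, Set.inter_eq_self_of_subset_left hu] at h
  have hsub4 : S4 ⊆ T := by rw [hTdec]; exact Set.subset_union_left
  have hsubp : Sp ⊆ T := by rw [hTdec]; exact Set.subset_union_of_subset_right Set.subset_union_left _
  have hsubq : Sq ⊆ T := by rw [hTdec]; exact Set.subset_union_of_subset_right Set.subset_union_right _
  have hsubpq : Sp ∪ Sq ⊆ T := Set.union_subset hsubp hsubq
  -- split the sum over T
  have h1 : ∑' x : T, f x = (∑' x : S4, f x) + ((∑' x : Sp, f x) + (∑' x : Sq, f x)) := by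
    rw [hTdec]
    rw [Summable.tsum_union_disjoint hd1 (hsub _ hsub4) (hsub _ hsubpq),
      Summable.tsum_union_disjoint hd2 (hsub _ hsubp) (hsub _ hsubq)]
  -- scale the sum over T
  have h2 : ∑' x : S4, f x = (lam : ℂ) ^ (-s) * ∑' x : T, f x := by
    calc ∑' x : S4, f x = ∑' ν : T, f (e ν) := (e.tsum_eq (fun μ : S4 => f μ.1)).symm
      _ = ∑' ν : T, (lam : ℂ) ^ (-s) * f ν.1 := tsum_congr hfm
      _ = (lam : ℂ) ^ (-s) * ∑' ν : T, f ν.1 := tsum_mul_left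
  have h2' : ∑' x : T, f x = (lam : ℂ) ^ s * ∑' x : S4, f x := by
    rw [h2, ← mul_assoc, hmul, one_mul]
  have h3 : (lam : ℂ) ^ s * ∑' x : S4, f x
      = (∑' x : S4, f x) + ((∑' x : Sp, f x) + (∑' x : Sq, f x)) := by
    rw [← h2']; exact h1
  show (∑' x : Sp, f x) + (∑' x : Sq, f x) = ((lam : ℂ) ^ s - 1) * ∑' x : S4, f x
  linear_combination -h3
end
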